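/- Define φ_τ(y) = y + τ·V(y), N(τ) = ∫_Y f(τ, φ_τ(y))·det(I + τ·DV(y)) dy and M(τ) = ∫_Y det(I + τ·DV(y)) dy, where DV(y) is the Jacobian matrix of V at y. Then the averaged quantity S(τ) = N(τ)/M(τ) is well defined for τ in a neighborhood of 0 and differentiable at τ = 0, with S'(0) = (1/|Y|)·∫_Y (f(0,y) − S(0))·div V(y) dy + (1/|Y|)·∫_Y (∂_τ f(0,y) + ∇_y f(0,y)·V(y)) dy, where |Y| = M(0) is the Lebesgue measure of Y. -/

import Mathlib

open MeasureTheory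

/-- Jacobian matrix `DV(y)` of a map `V : ℝⁿ → ℝⁿ`: `(DV)_{ij} = ∂_j V_i`. -/
noncomputable def jacMat (n : ℕ) (V : (Fin n → ℝ) → (Fin n → ℝ)) (y : Fin n → ℝ) :
    Matrix (Fin n) (Fin n) ℝ :=
  Matrix.of fun i j => fderiv ℝ V y (Pi.single j 1) i

/-- Divergence `div V(y) = Σ_i ∂_i V_i(y)`. -/
noncomputable def divg (n : ℕ) (V : (Fin n → ℝ) → (Fin n → ℝ)) (y : Fin n → ℝ) : ℝ :=
  ∑ i, fderiv ℝ V y (Pi.single i 1) i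

/-- `M(τ) = ∫_Y det(I + τ·DV(y)) dy`. -/
noncomputable def Mfun (n : ℕ) (Y : Set (Fin n → ℝ))
    (V : (Fin n → ℝ) → (Fin n → ℝ)) (τ : ℝ) : ℝ :=
  ∫ y in Y, ((1 : Matrix (Fin n) (Fin n) ℝ) + τ • jacMat n V y).det

/-- `N(τ) = ∫_Y f(τ, y + τ·V(y))·det(I + τ·DV(y)) dy`. -/
noncomputable def Nfun (n : ℕ) (Y : Set (Fin n → ℝ))
    (V : (Fin n → ℝ) → (Fin n → ℝ)) (f : ℝ × (Fin n → ℝ) → ℝ) (τ : ℝ) : ℝ :=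
  ∫ y in Y, f (τ, y + τ • V y) * ((1 : Matrix (Fin n) (Fin n) ℝ) + τ • jacMat n V y).det


noncomputable def detFun (n : ℕ) (M : Fin n → Fin n → ℝ) : ℝ := (Matrix.of M).det

lemma contDiff_detFun {n : ℕ} : ContDiff ℝ 1 (detFun n) := by
  have h : detFun n = fun M => ∑ σ : Equiv.Perm (Fin n),
      ((Equiv.Perm.sign σ : ℤ) : ℝ) * ∏ i, M (σ i) i := by
    funext M
    simp [detFun, Matrix.det_apply', Matrix.of_apply]
  rw [h]
  refine ContDiff.sum fun σ _ => ContDiff.mul contDiff_const ?_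
  refine contDiff_prod fun i _ => ?_
  exact ((ContinuousLinearMap.proj i).comp
    (ContinuousLinearMap.proj (R := ℝ) (φ := fun _ : Fin n => (Fin n → ℝ)) (σ i))).contDiff

noncomputable def jacFun (n : ℕ) (V : (Fin n → ℝ) → (Fin n → ℝ)) (y : Fin n → ℝ) :
    Fin n → Fin n → ℝ := fun i j => fderiv ℝ V y (Pi.single j 1) i

noncomputable def oneFun (n : ℕ) : Fin n → Fin n → ℝ := fun i j => if i = j then 1 else 0


lemma det_eq {n : ℕ} (V : (Fin n → ℝ) → (Fin n → ℝ)) (τ : ℝ) (y : Fin n → ℝ) :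
    ((1 : Matrix (Fin n) (Fin n) ℝ) + τ • jacMat n V y).det
      = detFun n (oneFun n + τ • jacFun n V y) := by
  unfold detFun
  congr 1

lemma detFun_one {n : ℕ} : detFun n (oneFun n) = 1 := by
  have : Matrix.of (oneFun n) = (1 : Matrix (Fin n) (Fin n) ℝ) := by
    ext i j; simp [oneFun, Matrix.one_apply]
  simp [detFun, this]

lemma hasDerivAt_det_at_zero {n : ℕ} (A : Fin n → Fin n → ℝ) :
    HasDerivAt (fun t : ℝ => detFun n (oneFun n + t • A)) (∑ i, A i i) 0 := by
  classical
  set Q : Polynomial ℝ :=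
    (Matrix.det (1 + (Polynomial.X : Polynomial ℝ) • (Matrix.of A).map Polynomial.C)).divX.divX
  have h1 : ∀ t : ℝ, detFun n (oneFun n + t • A)
      = 1 + (Matrix.of A).trace * t + Q.eval t * t ^ 2 := by
    intro t
    have h2 : ((1 : Matrix (Fin n) (Fin n) ℝ) + t • Matrix.of A).det
        = detFun n (oneFun n + t • A) := by
      unfold detFun
      congr 1
    rw [← h2]
    exact Matrix.det_one_add_smul t (Matrix.of A)
  have htr : (Matrix.of A).trace = ∑ i, A i i := by
    simp [Matrix.trace, Matrix.diag]
  have hq : HasDerivAt (fun t : ℝ => Q.eval t * t ^ 2)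
      (Polynomial.eval 0 (Polynomial.derivative Q) * 0 ^ 2 + Q.eval 0 * (2 * 0 ^ 1)) 0 :=
    (Q.hasDerivAt 0).mul (hasDerivAt_pow 2 0)
  have hlin : HasDerivAt (fun t : ℝ => 1 + (Matrix.of A).trace * t) ((Matrix.of A).trace) 0 := by
    simpa using ((hasDerivAt_id (0 : ℝ)).const_mul ((Matrix.of A).trace)).const_add 1
  have hsum := hlin.add hq
  have heq : (fun t : ℝ => detFun n (oneFun n + t • A))
      = fun t => 1 + (Matrix.of A).trace * t + Q.eval t * t ^ 2 := funext fun t => h1 t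
  rw [heq, ← htr]
  exact hsum.congr_deriv (by simp)

lemma fderiv_detFun_one {n : ℕ} (A : Fin n → Fin n → ℝ) :
    fderiv ℝ (detFun n) (oneFun n) A = ∑ i, A i i := by
  have hs : HasDerivAt (fun t : ℝ => oneFun n + t • A) A 0 := by
    simpa using ((hasDerivAt_id (0 : ℝ)).smul_const A).const_add (oneFun n)
  have hD : HasFDerivAt (detFun n) (fderiv ℝ (detFun n) (oneFun n)) (oneFun n) :=
    (contDiff_detFun.differentiable one_ne_zero (oneFun n)).hasFDerivAt
  have hg0 : oneFun n + (0 : ℝ) • A = oneFun n := by simp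
  rw [← hg0] at hD
  have h := hD.comp_hasDerivAt 0 hs
  rw [← hg0]
  exact h.unique (hasDerivAt_det_at_zero A)


lemma hasDerivAt_setIntegral {n : ℕ} {Y : Set (Fin n → ℝ)} (hYmeas : MeasurableSet Y)
    (hYbdd : Bornology.IsBounded Y)
    (F F' : ℝ → (Fin n → ℝ) → ℝ)
    (hFc : Continuous fun p : ℝ × (Fin n → ℝ) => F p.1 p.2)
    (hF'c : Continuous fun p : ℝ × (Fin n → ℝ) => F' p.1 p.2)
    (hder : ∀ (y : Fin n → ℝ) (τ : ℝ), HasDerivAt (fun t => F t y) (F' τ y) τ) :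
    HasDerivAt (fun τ => ∫ y in Y, F τ y) (∫ y in Y, F' 0 y) 0 := by
  obtain ⟨C, hC⟩ := (isCompact_Icc.prod hYbdd.isCompact_closure).exists_bound_of_continuousOn
    (s := (Set.Icc (-1 : ℝ) 1) ×ˢ closure Y) hF'c.continuousOn
  have hmeas : ∀ᶠ τ in nhds (0 : ℝ), AEStronglyMeasurable (F τ) (volume.restrict Y) :=
    Filter.Eventually.of_forall fun τ =>
      (hFc.comp (Continuous.prodMk_right τ)).aestronglyMeasurable
  have hint : Integrable (F 0) (volume.restrict Y) :=
    (((hFc.comp (Continuous.prodMk_right (0 : ℝ))).locallyIntegrable).integrableOn_isCompact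
      hYbdd.isCompact_closure).mono_set subset_closure
  have h'meas : AEStronglyMeasurable (F' 0) (volume.restrict Y) :=
    (hF'c.comp (Continuous.prodMk_right (0 : ℝ))).aestronglyMeasurable
  have hbound : ∀ᵐ y ∂(volume.restrict Y), ∀ τ ∈ Metric.ball (0 : ℝ) 1, ‖F' τ y‖ ≤ C := by
    filter_upwards [ae_restrict_mem hYmeas] with y hy
    intro τ hτ
    have hτ' : τ ∈ Set.Icc (-1 : ℝ) 1 := by
      have := Metric.mem_ball.1 hτ
      rw [Real.dist_eq, sub_zero] at this
      exact Set.mem_Icc.2 (abs_le.1 this.le)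
    exact hC (τ, y) ⟨hτ', subset_closure hy⟩
  have bint : Integrable (fun _ : Fin n → ℝ => C) (volume.restrict Y) :=
    integrableOn_const hYbdd.measure_lt_top.ne
  have hdiff : ∀ᵐ y ∂(volume.restrict Y), ∀ τ ∈ Metric.ball (0 : ℝ) 1,
      HasDerivAt (F · y) (F' τ y) τ :=
    Filter.Eventually.of_forall fun y τ _ => hder y τ
  exact (hasDerivAt_integral_of_dominated_loc_of_deriv_le (Metric.ball_mem_nhds 0 one_pos) hmeas hint h'meas
    hbound bint hdiff).2


theorem averaged_quantity_shape_sensitivity (n : ℕ) (hn : 1 ≤ n)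
    (Y : Set (Fin n → ℝ)) (hYmeas : MeasurableSet Y)
    (hYbdd : Bornology.IsBounded Y) (hYpos : 0 < volume Y)
    (V : (Fin n → ℝ) → (Fin n → ℝ)) (hV : ContDiff ℝ 1 V)
    (f : ℝ × (Fin n → ℝ) → ℝ) (hf : ContDiff ℝ 1 f) :
    ∃ ε > 0,
      (∀ τ : ℝ, |τ| < ε → Mfun n Y V τ ≠ 0) ∧
      HasDerivAt (fun τ : ℝ => Nfun n Y V f τ / Mfun n Y V τ)
        ((1 / Mfun n Y V 0) *
            (∫ y in Y, (f (0, y) - Nfun n Y V f 0 / Mfun n Y V 0) * divg n V y)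
          + (1 / Mfun n Y V 0) *
            (∫ y in Y, (fderiv ℝ f (0, y) (1, 0) + fderiv ℝ f (0, y) (0, V y)))) 0 := by
  classical
  have hVc : Continuous V := hV.continuous
  have hjc : Continuous (jacFun n V) := by
    refine continuous_pi fun i => continuous_pi fun j => ?_
    exact (continuous_apply i).comp
      ((hV.continuous_fderiv one_ne_zero).clm_apply continuous_const)
  have hdetc : Continuous (detFun n) := contDiff_detFun.continuous
  have hdet' : Continuous (fderiv ℝ (detFun n)) := contDiff_detFun.continuous_fderiv one_ne_zero
  have hfc : Continuous f := hf.continuous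
  have hf' : Continuous (fderiv ℝ f) := hf.continuous_fderiv one_ne_zero
  -- integrands
  let F : ℝ → (Fin n → ℝ) → ℝ :=
    fun τ y => f (τ, y + τ • V y) * detFun n (oneFun n + τ • jacFun n V y)
  let F' : ℝ → (Fin n → ℝ) → ℝ :=
    fun τ y => (fderiv ℝ f (τ, y + τ • V y)) (1, V y) * detFun n (oneFun n + τ • jacFun n V y)
      + f (τ, y + τ • V y) * fderiv ℝ (detFun n) (oneFun n + τ • jacFun n V y) (jacFun n V y)
  let G : ℝ → (Fin n → ℝ) → ℝ := fun τ y => detFun n (oneFun n + τ • jacFun n V y)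
  let G' : ℝ → (Fin n → ℝ) → ℝ :=
    fun τ y => fderiv ℝ (detFun n) (oneFun n + τ • jacFun n V y) (jacFun n V y)
  -- joint continuity
  have hmatc : Continuous fun p : ℝ × (Fin n → ℝ) => oneFun n + p.1 • jacFun n V p.2 :=
    continuous_const.add (continuous_fst.smul (hjc.comp continuous_snd))
  have hφc : Continuous fun p : ℝ × (Fin n → ℝ) => (p.1, p.2 + p.1 • V p.2) :=
    continuous_fst.prodMk (continuous_snd.add (continuous_fst.smul (hVc.comp continuous_snd)))
  have hFc : Continuous fun p : ℝ × (Fin n → ℝ) => F p.1 p.2 :=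
    (hfc.comp hφc).mul (hdetc.comp hmatc)
  have hGc : Continuous fun p : ℝ × (Fin n → ℝ) => G p.1 p.2 := hdetc.comp hmatc
  have hG'c : Continuous fun p : ℝ × (Fin n → ℝ) => G' p.1 p.2 :=
    (hdet'.comp hmatc).clm_apply (hjc.comp continuous_snd)
  have hF'c : Continuous fun p : ℝ × (Fin n → ℝ) => F' p.1 p.2 := by
    refine (((hf'.comp hφc).clm_apply ?_).mul (hdetc.comp hmatc)).add
      ((hfc.comp hφc).mul hG'c)
    exact continuous_const.prodMk (hVc.comp continuous_snd)
  -- pointwise derivatives in τ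
  have hderG : ∀ (y : Fin n → ℝ) (τ : ℝ), HasDerivAt (fun t => G t y) (G' τ y) τ := by
    intro y τ
    have hmat : HasDerivAt (fun t : ℝ => oneFun n + t • jacFun n V y) (jacFun n V y) τ := by
      simpa using ((hasDerivAt_id τ).smul_const (jacFun n V y)).const_add (oneFun n)
    exact (contDiff_detFun.differentiable one_ne_zero
      (oneFun n + τ • jacFun n V y)).hasFDerivAt.comp_hasDerivAt τ hmat
  have hderF : ∀ (y : Fin n → ℝ) (τ : ℝ), HasDerivAt (fun t => F t y) (F' τ y) τ := by
    intro y τ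
    have hφ : HasDerivAt (fun t : ℝ => (t, y + t • V y)) ((1 : ℝ), V y) τ := by
      refine (hasDerivAt_id τ).prodMk ?_
      simpa using ((hasDerivAt_id τ).smul_const (V y)).const_add y
    have h1 : HasDerivAt (fun t : ℝ => f (t, y + t • V y))
        ((fderiv ℝ f (τ, y + τ • V y)) (1, V y)) τ :=
      (hf.differentiable one_ne_zero (τ, y + τ • V y)).hasFDerivAt.comp_hasDerivAt τ hφ
    exact h1.mul (hderG y τ)
  -- dominated differentiation
  have hNd : HasDerivAt (fun τ => ∫ y in Y, F τ y) (∫ y in Y, F' 0 y) 0 :=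
    hasDerivAt_setIntegral hYmeas hYbdd F F' hFc hF'c hderF
  have hMd : HasDerivAt (fun τ => ∫ y in Y, G τ y) (∫ y in Y, G' 0 y) 0 :=
    hasDerivAt_setIntegral hYmeas hYbdd G G' hGc hG'c hderG
  have hNeq : Nfun n Y V f = fun τ => ∫ y in Y, F τ y := by
    funext τ
    simp only [Nfun, det_eq, F]
  have hMeq : Mfun n Y V = fun τ => ∫ y in Y, G τ y := by
    funext τ
    simp only [Mfun, det_eq, G]
  have hNd2 : HasDerivAt (Nfun n Y V f) (∫ y in Y, F' 0 y) 0 := by rw [hNeq]; exact hNd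
  have hMd2 : HasDerivAt (Mfun n Y V) (∫ y in Y, G' 0 y) 0 := by rw [hMeq]; exact hMd
  -- value of M at 0
  have hM0 : Mfun n Y V 0 = (volume Y).toReal := by
    rw [hMeq]
    simp only [G, zero_smul, add_zero, detFun_one]
    rw [setIntegral_const]
    simp [Measure.real]
  have hM0pos : 0 < Mfun n Y V 0 := by
    rw [hM0]; exact ENNReal.toReal_pos hYpos.ne' hYbdd.measure_lt_top.ne
  have hM0ne : Mfun n Y V 0 ≠ 0 := hM0pos.ne'
  -- values of the derivatives at 0
  have hG'0 : ∀ y, G' 0 y = divg n V y := by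
    intro y
    have h1 : oneFun n + (0 : ℝ) • jacFun n V y = oneFun n := by simp
    simp only [G', h1, fderiv_detFun_one]
    rfl
  have hF'0 : ∀ y, F' 0 y
      = fderiv ℝ f (0, y) (1, V y) + f (0, y) * divg n V y := by
    intro y
    have h1 : oneFun n + (0 : ℝ) • jacFun n V y = oneFun n := by simp
    have h2 : y + (0 : ℝ) • V y = y := by simp
    simp only [F', h1, h2, detFun_one, fderiv_detFun_one, mul_one]
    rfl
  -- integrability of the pieces
  have hint : ∀ g : (Fin n → ℝ) → ℝ, Continuous g → IntegrableOn g Y := fun g hg =>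
    (hg.locallyIntegrable.integrableOn_isCompact hYbdd.isCompact_closure).mono_set
      subset_closure
  have hdivc : Continuous (divg n V) := by
    refine continuous_finset_sum _ fun i _ => ?_
    exact (continuous_apply i).comp
      ((hV.continuous_fderiv one_ne_zero).clm_apply continuous_const)
  have hIdiv : IntegrableOn (divg n V) Y := hint _ hdivc
  have hIf : IntegrableOn (fun y => f (0, y) * divg n V y) Y :=
    hint _ ((hfc.comp (Continuous.prodMk_right 0)).mul hdivc)
  have hIfd : IntegrableOn (fun y => fderiv ℝ f (0, y) (1, V y)) Y :=
    hint _ (((hf'.comp (Continuous.prodMk_right 0)).clm_apply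
      (continuous_const.prodMk hVc)))
  have hN'val : (∫ y in Y, F' 0 y)
      = (∫ y in Y, fderiv ℝ f (0, y) (1, V y)) + ∫ y in Y, f (0, y) * divg n V y := by
    simp only [hF'0]
    exact integral_add hIfd hIf
  have hM'val : (∫ y in Y, G' 0 y) = ∫ y in Y, divg n V y := by simp only [hG'0]
  -- neighborhood of nonvanishing
  have hne : ∀ᶠ τ in nhds (0 : ℝ), Mfun n Y V τ ≠ 0 :=
    hMd2.continuousAt.eventually_ne hM0ne
  obtain ⟨ε, hε, hball⟩ := Metric.eventually_nhds_iff.1 hne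
  refine ⟨ε, hε, fun τ hτ => hball (by simpa [Real.dist_eq] using hτ), ?_⟩
  have hdiv := hNd2.div hMd2 hM0ne
  rw [hN'val, hM'val] at hdiv
  refine hdiv.congr_deriv ?_
  have e1 : (∫ y in Y, (fderiv ℝ f (0, y) (1, 0) + fderiv ℝ f (0, y) (0, V y)))
      = ∫ y in Y, fderiv ℝ f (0, y) (1, V y) := by
    congr 1
    funext y
    rw [← ContinuousLinearMap.map_add]
    norm_num
  have e2 : (∫ y in Y, (f (0, y) - Nfun n Y V f 0 / Mfun n Y V 0) * divg n V y)
      = (∫ y in Y, f (0, y) * divg n V y)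
        - (Nfun n Y V f 0 / Mfun n Y V 0) * ∫ y in Y, divg n V y := by
    simp only [sub_mul]
    rw [integral_sub hIf (hIdiv.const_mul _), integral_const_mul]
  rw [e1, e2]
  field_simp
  ring
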